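/- Let a ≥ 0, b > 0, k > 1, Δ ∈ ℝ with a/k + Δ ≥ 0 and a/k + Δ ≤ a. Suppose player i spends a/k + Δ on the current battle (of value x > 0) while opponents spend b/k in total, and thereafter all players (including i) spend proportionally, so that i's remaining-budget share is (a - a/k - Δ)/((a - a/k - Δ) + (b - b/k)). Then i's total expected value under Tullock success probabilities, x·(a + Δk)/(a + Δk + b) + (k-1)x·(a - a/k - Δ)/(a - a/k - Δ + b - b/k), is maximized over Δ at Δ = 0, where it equals x·k·a/(a+b). -/

import Mathlib

theorem stmt_16 (a b k x : ℝ) (ha : 0 ≤ a) (hb : 0 < b) (hk : 1 < k) (hx : 0 < x) :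
    let F : ℝ → ℝ := fun Δ =>
      x * (a + Δ * k) / (a + Δ * k + b) +
        (k - 1) * x * ((a - a / k - Δ) / (a - a / k - Δ + b - b / k))
    (∀ Δ : ℝ, 0 ≤ a / k + Δ → a / k + Δ ≤ a → F Δ ≤ x * k * a / (a + b)) ∧
      F 0 = x * k * a / (a + b) := by
  intro F
  have hk0 : (0:ℝ) < k := lt_trans one_pos hk
  have hk0' : k ≠ 0 := ne_of_gt hk0
  have hS : 0 < a + b := by linarith
  have hS' : a + b ≠ 0 := ne_of_gt hS
  have hbk : 0 < b - b / k := by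
    rw [sub_pos, div_lt_iff₀ hk0]
    nlinarith
  have efrac : ∀ Δ : ℝ, ((k - 1) * (a + b) - Δ * k) ≠ 0 →
      (a - a / k - Δ) / (a - a / k - Δ + b - b / k) =
        ((k - 1) * a - Δ * k) / ((k - 1) * (a + b) - Δ * k) := by
    intro Δ hne
    have eN : a - a / k - Δ = ((k - 1) * a - Δ * k) / k := by field_simp
    have eD : a - a / k - Δ + b - b / k = ((k - 1) * (a + b) - Δ * k) / k := by
      field_simp; ring
    rw [eD, eN]; rw [div_div_div_cancel_right₀ hk0']
  have eDk : ∀ Δ : ℝ, k * (a - a / k - Δ + b - b / k) = (k - 1) * (a + b) - Δ * k := by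
    intro Δ; field_simp; ring
  constructor
  · intro Δ h1 h2
    have hak : a + Δ * k = k * (a / k + Δ) := by field_simp
    have hD1 : 0 < a + Δ * k + b := by
      have : 0 ≤ a + Δ * k := by rw [hak]; positivity
      linarith
    have ht : 0 ≤ a - a / k - Δ := by linarith
    have hD2 : 0 < a - a / k - Δ + b - b / k := by linarith
    have hDk : 0 < (k - 1) * (a + b) - Δ * k := by
      have := mul_pos hk0 hD2
      rw [eDk Δ] at this
      exact this
    have hD1' : a + Δ * k + b ≠ 0 := ne_of_gt hD1
    have hDk' : (k - 1) * (a + b) - Δ * k ≠ 0 := ne_of_gt hDk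
    have key : x * k * a / (a + b) - F Δ =
        x * b * k * (Δ * k) ^ 2 /
          ((a + b) * ((a + Δ * k + b) * ((k - 1) * (a + b) - Δ * k))) := by
      show x * k * a / (a + b) - (x * (a + Δ * k) / (a + Δ * k + b) +
        (k - 1) * x * ((a - a / k - Δ) / (a - a / k - Δ + b - b / k))) = _
      rw [efrac Δ hDk']
      rw [mul_div_assoc', div_add_div _ _ hD1' hDk', div_sub_div _ _ hS' (mul_ne_zero hD1' hDk'), div_eq_div_iff (mul_ne_zero hS' (mul_ne_zero hD1' hDk')) (mul_ne_zero hS' (mul_ne_zero hD1' hDk'))]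
      ring
    have hpos : 0 ≤ x * b * k * (Δ * k) ^ 2 /
        ((a + b) * ((a + Δ * k + b) * ((k - 1) * (a + b) - Δ * k))) := by
      positivity
    linarith
  · show x * (a + 0 * k) / (a + 0 * k + b) +
      (k - 1) * x * ((a - a / k - 0) / (a - a / k - 0 + b - b / k)) = x * k * a / (a + b)
    have hDk' : (k - 1) * (a + b) - 0 * k ≠ 0 := by
      have : 0 < (k - 1) * (a + b) := mul_pos (by linarith) hS
      simpa using ne_of_gt this
    rw [efrac 0 hDk']
    have hk1 : k - 1 ≠ 0 := by intro h; nlinarith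
    field_simp
    ring
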